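/- Let a, b be nonzero real numbers, let t ∈ (0,1), and set s := √(t(1−t)). In M₂(ℂ), let A := [[1,0],[0,0]] and B := [[t,s],[s,1−t]], and let C ∈ M₂(ℂ) be a projection (C* = C, C² = C) such that A commutes with aB + bC and B commutes with aA + C. Then necessarily t = (b² + 2a²b − a²b² − a²)/(4a²b). -/

import Mathlib

/-- for nonzero reals a, b, t ∈ (0,1), s = √(t(1−t)),
A = [[1,0],[0,0]], B = [[t,s],[s,1−t]] in M₂(ℂ), and a projection C such that A
commutes with aB + bC and B commutes with aA + C, necessarily
t = (b² + 2a²b − a²b² − a²)/(4a²b). -/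
theorem stmt17 (a b : ℝ) (ha : a ≠ 0) (hb : b ≠ 0)
    (t : ℝ) (ht : t ∈ Set.Ioo (0 : ℝ) 1)
    (s : ℝ) (hs : s = Real.sqrt (t * (1 - t)))
    (C : Matrix (Fin 2) (Fin 2) ℂ) (hCsa : star C = C) (hCidem : C * C = C)
    (hcommA : Commute (!![1, 0; 0, 0] : Matrix (Fin 2) (Fin 2) ℂ)
      ((a : ℂ) • (!![(t : ℂ), (s : ℂ); (s : ℂ), 1 - (t : ℂ)]) + (b : ℂ) • C))
    (hcommB : Commute (!![(t : ℂ), (s : ℂ); (s : ℂ), 1 - (t : ℂ)])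
      ((a : ℂ) • (!![1, 0; 0, 0] : Matrix (Fin 2) (Fin 2) ℂ) + C)) :
    t = (b ^ 2 + 2 * a ^ 2 * b - a ^ 2 * b ^ 2 - a ^ 2) / (4 * a ^ 2 * b) := by
  obtain ⟨ht0, ht1⟩ := ht
  have hspos : 0 < s := by
    rw [hs]; exact Real.sqrt_pos.2 (by nlinarith)
  have hs2 : s ^ 2 = t * (1 - t) := by
    rw [hs, Real.sq_sqrt (by nlinarith : (0:ℝ) ≤ t * (1 - t))]
  have hs2c : (s:ℂ) ^ 2 = (t:ℂ) * (1 - t) := by exact_mod_cast hs2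
  have haC : (a:ℂ) ≠ 0 := by exact_mod_cast ha
  have hbC : (b:ℂ) ≠ 0 := by exact_mod_cast hb
  have hsC : (s:ℂ) ≠ 0 := by exact_mod_cast hspos.ne'
  have hA := hcommA.eq
  have hB := hcommB.eq
  have e1 : (a:ℂ) * s + b * C 0 1 = 0 := by
    have := congrFun (congrFun hA 0) 1
    simpa [Matrix.mul_apply, Fin.sum_univ_two, Matrix.add_apply, Matrix.smul_apply] using this
  have e2 : (0:ℂ) = (a:ℂ) * s + b * C 1 0 := by
    have := congrFun (congrFun hA 1) 0
    simpa [Matrix.mul_apply, Fin.sum_univ_two, Matrix.add_apply, Matrix.smul_apply] using this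
  have hc01 : C 0 1 = -((a:ℂ) * s) / b := by
    field_simp; linear_combination e1
  have hc10 : C 1 0 = -((a:ℂ) * s) / b := by
    field_simp; linear_combination -e2
  have hc01ne : C 0 1 ≠ 0 := by
    rw [hc01]; simp [haC, hbC, hsC]
  have e4 : C 0 0 * C 0 0 + C 0 1 * C 1 0 = C 0 0 := by
    have := congrFun (congrFun hCidem 0) 0
    simpa [Matrix.mul_apply, Fin.sum_univ_two] using this
  have e5 : C 0 0 * C 0 1 + C 0 1 * C 1 1 = C 0 1 := by
    have := congrFun (congrFun hCidem 0) 1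
    simpa [Matrix.mul_apply, Fin.sum_univ_two] using this
  have hc11 : C 1 1 = 1 - C 0 0 := by
    have h : (C 0 0 + C 1 1 - 1) * C 0 1 = 0 := by linear_combination e5
    rcases mul_eq_zero.1 h with h | h
    · linear_combination h
    · exact absurd h hc01ne
  have e3 : (t:ℂ) * C 0 1 + s * C 1 1 = ((a:ℂ) + C 0 0) * s + C 0 1 * (1 - t) := by
    have := congrFun (congrFun hB 0) 1
    simpa [Matrix.mul_apply, Fin.sum_univ_two, Matrix.add_apply, Matrix.smul_apply] using this
  rw [hc01, hc11] at e3
  have hc00 : C 0 0 * (2 * b) = (1 - a) * b + (1 - 2 * t) * a := by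
    have h := e3
    field_simp at h
    apply mul_left_cancel₀ hsC
    linear_combination (-(s:ℂ)) * h
  have hc00v : C 0 0 = ((1 - (a:ℂ)) * b + (1 - 2 * t) * a) / (2 * b) := by
    field_simp
    linear_combination hc00
  rw [hc01, hc10, hc00v] at e4
  have key : (t:ℂ) * (4 * a ^ 2 * b) = b ^ 2 + 2 * a ^ 2 * b - a ^ 2 * b ^ 2 - a ^ 2 := by
    field_simp at e4
    have key2 : ((t:ℂ) * (4 * a ^ 2 * b) - (b ^ 2 + 2 * a ^ 2 * b - a ^ 2 * b ^ 2 - a ^ 2))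
        * (2 * (b:ℂ) ^ 3) = 0 := by
      linear_combination 2 * (b:ℂ) ^ 3 * e4 - 8 * (a:ℂ) ^ 2 * (b:ℂ) ^ 3 * hs2c
    have h2b : (2 * (b:ℂ) ^ 3) ≠ 0 := by simp [hbC]
    have := (mul_eq_zero.1 key2).resolve_right h2b
    linear_combination this
  have keyR : t * (4 * a ^ 2 * b) = b ^ 2 + 2 * a ^ 2 * b - a ^ 2 * b ^ 2 - a ^ 2 := by
    exact_mod_cast key
  have h4ab : 4 * a ^ 2 * b ≠ 0 := by
    simp [pow_eq_zero_iff, ha, hb]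
  field_simp
  linarith [keyR]
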